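/- Let V be a finite-dimensional real inner product space, C ⊆ V a proper cone and F a Finsler function on C. Then for every p ∈ C^o one has F^o p = sInf {(-⟪p, y⟫) / F y | y ∈ C ∧ 0 < F y}. Moreover, if F is upper semicontinuous on C and ⟪p, y⟫ < 0 for every y ∈ C, then the infimum is attained: there exists y ∈ C with 0 < F y and -⟪p, y⟫ = F^o p * F y. -/

import Mathlib

/-- The polar cone of `C`. -/
def polarConeSet {V : Type*} [NormedAddCommGroup V] [InnerProductSpace ℝ V]
    (C : Set V) : Set V :=
  {p : V | p ≠ 0 ∧ ∀ y ∈ C, (inner ℝ p y : ℝ) ≤ 0}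

/-- The set whose supremum defines the polar Finsler function `F^o p`. -/
def polarWSet {V : Type*} [NormedAddCommGroup V] [InnerProductSpace ℝ V]
    (C : Set V) (F : V → ℝ) (p : V) : Set ℝ :=
  {w : ℝ | 0 ≤ w ∧ ∀ y ∈ C, (inner ℝ p y : ℝ) + w * F y ≤ 0}

/-- The polar Finsler function `F^o`. -/
noncomputable def polarFinsler {V : Type*} [NormedAddCommGroup V] [InnerProductSpace ℝ V]
    (C : Set V) (F : V → ℝ) (p : V) : ℝ :=
  sSup (polarWSet C F p)


/-- An upper semicontinuous function on a nonempty compact set attains its maximum. -/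
lemma usc_exists_max {X : Type*} [TopologicalSpace X] {K : Set X} (hK : IsCompact K)
    (hne : K.Nonempty) {f : X → ℝ} (hf : UpperSemicontinuousOn f K) :
    ∃ x ∈ K, ∀ y ∈ K, f y ≤ f x := by
  set t : K → Set X := fun y => closure {z | z ∈ K ∧ f y ≤ f z} with ht
  have hfip : ∀ u : Finset K, (K ∩ ⋂ i ∈ u, t i).Nonempty := by
    intro u
    rcases u.eq_empty_or_nonempty with rfl | hu
    · simpa using hne
    · obtain ⟨b, hb, hbmax⟩ := u.exists_max_image (fun y : K => f y) hu
      refine ⟨b, b.2, ?_⟩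
      simp only [Set.mem_iInter]
      intro i hi
      exact subset_closure ⟨b.2, hbmax i hi⟩
  obtain ⟨x, hxK, hx⟩ := hK.inter_iInter_nonempty t (fun i => isClosed_closure) hfip
  refine ⟨x, hxK, ?_⟩
  intro y hy
  by_contra hlt
  push_neg at hlt
  have hxc : x ∈ t ⟨y, hy⟩ := by
    simp only [Set.mem_iInter] at hx
    exact hx ⟨y, hy⟩
  have hub : ∀ᶠ z in nhdsWithin x K, f z < f y := hf x hxK (f y) hlt
  have hne2 : (nhdsWithin x {z | z ∈ K ∧ f y ≤ f z}).NeBot :=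
    mem_closure_iff_nhdsWithin_neBot.mp hxc
  have hmono : nhdsWithin x {z | z ∈ K ∧ f y ≤ f z} ≤ nhdsWithin x K :=
    nhdsWithin_mono x (fun z hz => hz.1)
  have hub2 : ∀ᶠ z in nhdsWithin x {z | z ∈ K ∧ f y ≤ f z}, f z < f y := hub.filter_mono hmono
  have hmem : ∀ᶠ z in nhdsWithin x {z | z ∈ K ∧ f y ≤ f z}, z ∈ {z | z ∈ K ∧ f y ≤ f z} :=
    self_mem_nhdsWithin
  obtain ⟨z, hz1, hz2⟩ := (hub2.and hmem).exists
  exact absurd hz2.2 (not_le.mpr hz1)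

/-- `F^o p` is the infimum of `-⟪p, y⟫ / F y` over `y ∈ C` with `F y > 0`, and for
upper semicontinuous `F` and `p` with `⟪p, y⟫ < 0` on all of `C` the infimum is
attained. -/
theorem polarFinsler_eq_sInf_and_attained
    {V : Type*} [NormedAddCommGroup V] [InnerProductSpace ℝ V] [FiniteDimensional ℝ V]
    (C : Set V) (hne : C.Nonempty) (hconv : Convex ℝ C) (h0 : (0:V) ∉ C)
    (hcone : ∀ (s : ℝ) (y : V), 0 < s → y ∈ C → s • y ∈ C)
    (hclosed : IsClosed (C ∪ {0}))
    (hint : (interior (C ∪ {0})).Nonempty)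
    (F : V → ℝ)
    (hFnn : ∀ y ∈ C, 0 ≤ F y)
    (hFhom : ∀ (s : ℝ) (y : V), 0 < s → y ∈ C → F (s • y) = s * F y)
    (hFconc : ∀ y ∈ C, ∀ w ∈ C, ∀ t : ℝ, t ∈ Set.Icc (0:ℝ) 1 →
      t * F y + (1 - t) * F w ≤ F (t • y + (1 - t) • w))
    (hFpos : ∃ y₁ ∈ C, 0 < F y₁) :
    (∀ p ∈ polarConeSet C,
      polarFinsler C F p =
        sInf {r : ℝ | ∃ y ∈ C, 0 < F y ∧ r = (-(inner ℝ p y : ℝ)) / F y}) ∧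
    (UpperSemicontinuousOn F C →
      ∀ p ∈ polarConeSet C, (∀ y ∈ C, (inner ℝ p y : ℝ) < 0) →
        ∃ y ∈ C, 0 < F y ∧ -(inner ℝ p y : ℝ) = polarFinsler C F p * F y) := by
  obtain ⟨y₁, hy₁C, hy₁F⟩ := hFpos
  have key : ∀ p ∈ polarConeSet C,
      polarFinsler C F p =
        sInf {r : ℝ | ∃ y ∈ C, 0 < F y ∧ r = (-(inner ℝ p y : ℝ)) / F y} := by
    intro p hp
    obtain ⟨hp0, hple⟩ := hp
    set R := {r : ℝ | ∃ y ∈ C, 0 < F y ∧ r = (-(inner ℝ p y : ℝ)) / F y} with hR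
    have hRne : R.Nonempty := ⟨_, y₁, hy₁C, hy₁F, rfl⟩
    have hRlb : ∀ r ∈ R, (0:ℝ) ≤ r := by
      rintro r ⟨y, hy, hFy, rfl⟩
      exact div_nonneg (by linarith [hple y hy]) hFy.le
    have hRbdd : BddBelow R := ⟨0, hRlb⟩
    have hmem : sInf R ∈ polarWSet C F p := by
      refine ⟨le_csInf hRne hRlb, ?_⟩
      intro y hy
      rcases (hFnn y hy).eq_or_lt with h | h
      · rw [← h]; simpa using hple y hy
      · have h1 : sInf R ≤ (-(inner ℝ p y : ℝ)) / F y := csInf_le hRbdd ⟨y, hy, h, rfl⟩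
        have h2 : sInf R * F y ≤ -(inner ℝ p y : ℝ) := (le_div_iff₀ h).mp h1
        linarith
    have hS0 : (0:ℝ) ∈ polarWSet C F p := ⟨le_refl 0, fun y hy => by simpa using hple y hy⟩
    have hSbdd : BddAbove (polarWSet C F p) := by
      refine ⟨(-(inner ℝ p y₁ : ℝ)) / F y₁, ?_⟩
      rintro w ⟨hw0, hw⟩
      have := hw y₁ hy₁C
      exact (le_div_iff₀ hy₁F).mpr (by linarith)
    refine le_antisymm ?_ (le_csSup hSbdd hmem)
    refine csSup_le ⟨0, hS0⟩ ?_
    rintro w ⟨hw0, hw⟩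
    refine le_csInf hRne ?_
    rintro r ⟨y, hy, hFy, rfl⟩
    exact (le_div_iff₀ hFy).mpr (by linarith [hw y hy])
  refine ⟨key, ?_⟩
  intro husc p hp hneg
  obtain ⟨hp0, hple⟩ := hp
  -- the compact slice K
  set K := {y : V | y ∈ C ∧ (inner ℝ p y : ℝ) = -1} with hK
  have hKsubC : K ⊆ C := fun y hy => hy.1
  have hy₁0 : y₁ ≠ 0 := fun h => h0 (h ▸ hy₁C)
  -- element of K from y₁
  have hy₁neg : (0:ℝ) < -(inner ℝ p y₁ : ℝ) := by linarith [hneg y₁ hy₁C]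
  set s₁ : ℝ := (-(inner ℝ p y₁ : ℝ))⁻¹ with hs₁
  have hs₁pos : 0 < s₁ := inv_pos.mpr hy₁neg
  have hy₂C : s₁ • y₁ ∈ C := hcone s₁ y₁ hs₁pos hy₁C
  have hy₂K : s₁ • y₁ ∈ K := by
    refine ⟨hy₂C, ?_⟩
    have h : (inner ℝ p y₁ : ℝ) ≠ 0 := by linarith
    rw [real_inner_smul_right, hs₁, inv_neg, neg_mul, inv_mul_cancel₀ h]
  have hy₂F : 0 < F (s₁ • y₁) := by
    rw [hFhom s₁ y₁ hs₁pos hy₁C]; positivity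
  -- the unit sphere slice
  set S' := (C ∪ {0}) ∩ Metric.sphere (0:V) 1 with hS'
  have hS'comp : IsCompact S' :=
    (isCompact_sphere (0:V) 1).of_isClosed_subset (hclosed.inter Metric.isClosed_sphere)
      Set.inter_subset_right
  have hS'sub : S' ⊆ C := by
    rintro d ⟨hd1, hd2⟩
    rcases hd1 with h | h
    · exact h
    · exfalso
      simp only [Set.mem_singleton_iff] at h
      rw [h] at hd2
      simp at hd2
  have hS'ne : S'.Nonempty := by
    refine ⟨‖y₁‖⁻¹ • y₁, Or.inl (hcone _ y₁ (inv_pos.mpr (norm_pos_iff.mpr hy₁0)) hy₁C), ?_⟩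
    rw [mem_sphere_zero_iff_norm, norm_smul, norm_inv, norm_norm,
      inv_mul_cancel₀ (norm_ne_zero_iff.mpr hy₁0)]
  have hgcont : Continuous fun d : V => -(inner ℝ p d : ℝ) := by
    have : Continuous fun d : V => (inner ℝ p d : ℝ) := continuous_inner.comp
      (continuous_const.prodMk continuous_id)
    exact this.neg
  obtain ⟨d₀, hd₀S, hd₀min⟩ := hS'comp.exists_isMinOn hS'ne hgcont.continuousOn
  set m : ℝ := -(inner ℝ p d₀ : ℝ) with hm
  have hmpos : 0 < m := by
    have := hneg d₀ (hS'sub hd₀S)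
    linarith
  -- K is bounded
  have hKbd : ∀ y ∈ K, ‖y‖ ≤ 1 / m := by
    rintro y ⟨hyC, hyip⟩
    have hy0 : y ≠ 0 := fun h => h0 (h ▸ hyC)
    have hny : 0 < ‖y‖ := norm_pos_iff.mpr hy0
    have hd : ‖y‖⁻¹ • y ∈ S' := by
      refine ⟨Or.inl (hcone _ y (by positivity) hyC), ?_⟩
      simp [norm_smul, abs_of_pos, inv_mul_cancel₀ hny.ne']
    have h1 : m ≤ -(inner ℝ p (‖y‖⁻¹ • y) : ℝ) := hd₀min hd
    rw [real_inner_smul_right, hyip] at h1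
    have h1' : m ≤ ‖y‖⁻¹ := by linarith
    have h2 : ‖y‖ * m ≤ ‖y‖ * ‖y‖⁻¹ := mul_le_mul_of_nonneg_left h1' hny.le
    rw [mul_inv_cancel₀ hny.ne'] at h2
    rw [le_div_iff₀ hmpos]
    exact h2
  -- K is compact
  have hKeq : K = (C ∪ {0}) ∩ {y : V | (inner ℝ p y : ℝ) = -1} := by
    ext y
    constructor
    · rintro ⟨h1, h2⟩; exact ⟨Or.inl h1, h2⟩
    · rintro ⟨h1, h2⟩
      rcases h1 with h | h
      · exact ⟨h, h2⟩
      · exfalso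
        simp only [Set.mem_singleton_iff] at h
        rw [h] at h2
        simp only [inner_zero_right, Set.mem_setOf_eq] at h2
        norm_num at h2
  have hKclosed : IsClosed K := by
    rw [hKeq]
    exact hclosed.inter (isClosed_eq (continuous_const.inner continuous_id) continuous_const)
  have hKcomp : IsCompact K := by
    refine (isCompact_closedBall (0:V) (1/m)).of_isClosed_subset hKclosed ?_
    intro y hy
    simpa [Metric.mem_closedBall] using hKbd y hy
  have hKne : K.Nonempty := ⟨_, hy₂K⟩
  -- F attains its maximum on K
  obtain ⟨ystar, hystarK, hystarmax⟩ := usc_exists_max hKcomp hKne (husc.mono hKsubC)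
  have hystarC : ystar ∈ C := hystarK.1
  have hystarip : (inner ℝ p ystar : ℝ) = -1 := hystarK.2
  have hFstar : 0 < F ystar := lt_of_lt_of_le hy₂F (hystarmax _ hy₂K)
  -- sInf R = 1 / F ystar
  set R := {r : ℝ | ∃ y ∈ C, 0 < F y ∧ r = (-(inner ℝ p y : ℝ)) / F y} with hR
  have hmemR : 1 / F ystar ∈ R := ⟨ystar, hystarC, hFstar, by rw [hystarip]; norm_num⟩
  have hlbR : ∀ r ∈ R, 1 / F ystar ≤ r := by
    rintro r ⟨y, hyC, hFy, rfl⟩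
    have ht : (0:ℝ) < -(inner ℝ p y : ℝ) := by linarith [hneg y hyC]
    set t : ℝ := (-(inner ℝ p y : ℝ))⁻¹ with htdef
    have htpos : 0 < t := inv_pos.mpr ht
    have hzC : t • y ∈ C := hcone t y htpos hyC
    have hzK : t • y ∈ K := by
      refine ⟨hzC, ?_⟩
      have h : (inner ℝ p y : ℝ) ≠ 0 := by linarith
      rw [real_inner_smul_right, htdef, inv_neg, neg_mul, inv_mul_cancel₀ h]
    have hzF : F (t • y) = t * F y := hFhom t y htpos hyC
    have hzFpos : 0 < F (t • y) := by rw [hzF]; positivity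
    have hle : F (t • y) ≤ F ystar := hystarmax _ hzK
    have h1 : 1 / F ystar ≤ 1 / F (t • y) := one_div_le_one_div_of_le hzFpos hle
    calc 1 / F ystar ≤ 1 / F (t • y) := h1
      _ = (-(inner ℝ p y : ℝ)) / F y := by
        rw [div_eq_div_iff hzFpos.ne' hFy.ne', one_mul, hzF, htdef, ← mul_assoc,
          mul_inv_cancel₀ ht.ne', one_mul]
  have hInf : sInf R = 1 / F ystar :=
    le_antisymm (csInf_le ⟨0, fun r hr => by
      rcases hr with ⟨y, hy, hFy, rfl⟩
      exact div_nonneg (by linarith [hple y hy]) hFy.le⟩ hmemR) (le_csInf ⟨_, hmemR⟩ hlbR)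
  refine ⟨ystar, hystarC, hFstar, ?_⟩
  rw [key p ⟨hp0, hple⟩, ← hR, hInf, hystarip, neg_neg, one_div,
    inv_mul_cancel₀ hFstar.ne']
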